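/- Define γ̃(h) = arccot(sinh h) for h ≥ 0 (so γ̃(0) = π/2), β̃(h) = (γ̃(h−1) − γ̃(h+1))/2 for h > 1, and β̃(h) = (π − γ̃(h+1) − γ̃(1−h))/2 for 0 ≤ h ≤ 1. Then for all h ≥ 0: (2/π)·arccos(1/cosh(1)) · γ̃(h) ≤ β̃(h) ≤ sinh(1) · γ̃(h). -/

import Mathlib

open Real

/-- arccot : ℝ → (0,π), the inverse cotangent. -/
noncomputable def arccot (x : ℝ) : ℝ := π / 2 - Real.arctan x

/-- γ̃(h) = arccot(sinh h). -/
noncomputable def gammaT (h : ℝ) : ℝ := arccot (Real.sinh h)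

/-- β̃(h) = (γ̃(h-1) - γ̃(h+1))/2 for h > 1 and (π - γ̃(h+1) - γ̃(1-h))/2 for 0 ≤ h ≤ 1. -/
noncomputable def betaT (h : ℝ) : ℝ :=
  if h ≤ 1 then (π - gammaT (h + 1) - gammaT (1 - h)) / 2
  else (gammaT (h - 1) - gammaT (h + 1)) / 2

open Filter Topology

section Auxiliary

/-- The Gudermannian function. -/
noncomputable def gd (x : ℝ) : ℝ := Real.arctan (Real.sinh x)

lemma gd_hasDerivAt (x : ℝ) : HasDerivAt gd (1 / Real.cosh x) x := by
  have h := (Real.hasDerivAt_arctan (Real.sinh x)).comp x (Real.hasDerivAt_sinh x)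
  refine h.congr_deriv (Eq.symm ?_)
  rw [← Real.cosh_sq']
  have hc := Real.cosh_pos x
  field_simp

lemma gd_neg (x : ℝ) : gd (-x) = - gd x := by
  simp [gd, Real.sinh_neg, Real.arctan_neg]

lemma sinh_tendsto : Tendsto Real.sinh atTop atTop :=
  tendsto_atTop_atTop_of_monotone Real.sinh_strictMono.monotone
    (fun b => ⟨Real.arsinh b, (Real.sinh_arsinh b).ge⟩)

lemma gd_tendsto : Tendsto gd atTop (𝓝 (π/2)) :=
  (tendsto_nhds_of_tendsto_nhdsWithin Real.tendsto_arctan_atTop).comp sinh_tendsto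

/-- `betaT` written via `gd`. -/
noncomputable def Fb (x : ℝ) : ℝ := (gd (x+1) - gd (x-1))/2
/-- `gammaT` written via `gd`. -/
noncomputable def Gm (x : ℝ) : ℝ := π/2 - gd x
/-- The lower-bound constant. -/
noncomputable def c1 : ℝ := 2/π * Real.arccos (1/Real.cosh 1)

lemma gammaT_eq (h : ℝ) : gammaT h = Gm h := rfl

lemma betaT_eq (h : ℝ) : betaT h = Fb h := by
  have key : ∀ x : ℝ, gammaT x = π/2 - gd x := fun x => rfl
  unfold betaT Fb
  split
  · rw [key, key, show (1 - h) = -(h-1) by ring, gd_neg]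
    ring
  · rw [key, key]
    ring

lemma cosh_mul_cosh (x : ℝ) :
    Real.cosh (x-1) * Real.cosh (x+1) = 1 + Real.sinh x^2 + Real.sinh 1^2 := by
  rw [Real.cosh_sub, Real.cosh_add]
  have h1 := Real.cosh_sq' x
  have h2 := Real.cosh_sq' 1
  nlinarith [h1, h2]

lemma Fb_hasDerivAt (x : ℝ) :
    HasDerivAt Fb (-(Real.sinh x * Real.sinh 1)/(1 + Real.sinh x^2 + Real.sinh 1^2)) x := by
  have h1 : HasDerivAt (fun t => gd (t+1)) (1 / Real.cosh (x+1)) x := by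
    exact ((gd_hasDerivAt (x+1)).comp x ((hasDerivAt_id x).add_const 1)).congr_deriv (g' := 1 / Real.cosh (x+1)) (by simp)
  have h2 : HasDerivAt (fun t => gd (t-1)) (1 / Real.cosh (x-1)) x := by
    exact ((gd_hasDerivAt (x-1)).comp x ((hasDerivAt_id x).sub_const 1)).congr_deriv (g' := 1 / Real.cosh (x-1)) (by simp)
  have h := (h1.sub h2).div_const 2
  refine h.congr_deriv (Eq.symm ?_)
  have hB := Real.cosh_pos (x-1)
  have hC := Real.cosh_pos (x+1)
  have hP : (0:ℝ) < 1 + Real.sinh x^2 + Real.sinh 1^2 := by positivity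
  have key : Real.cosh (x+1) - Real.cosh (x-1) = 2 * Real.sinh x * Real.sinh 1 := by
    rw [Real.cosh_add, Real.cosh_sub]; ring
  rw [div_sub_div _ _ hC.ne' hB.ne']
  rw [mul_comm (Real.cosh (x+1)) (Real.cosh (x-1)), cosh_mul_cosh, div_div,
    div_eq_div_iff hP.ne' (by positivity)]
  nlinarith [key]

lemma Gm_hasDerivAt (x : ℝ) : HasDerivAt Gm (-(1 / Real.cosh x)) x := by
  exact ((hasDerivAt_const x (π/2)).sub (gd_hasDerivAt x)).congr_deriv (by simp)

lemma Fb_tendsto : Tendsto Fb atTop (𝓝 0) := by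
  have h1 : Tendsto (fun x : ℝ => gd (x+1)) atTop (𝓝 (π/2)) :=
    gd_tendsto.comp (tendsto_atTop_add_const_right atTop 1 tendsto_id)
  have h2 : Tendsto (fun x : ℝ => gd (x-1)) atTop (𝓝 (π/2)) :=
    gd_tendsto.comp (tendsto_atTop_add_const_right atTop (-1) tendsto_id)
  have := (h1.sub h2).div_const 2
  rw [sub_self, zero_div] at this; exact this

lemma Gm_tendsto : Tendsto Gm atTop (𝓝 0) := by
  have h : Tendsto (fun x : ℝ => π/2 - gd x) atTop (𝓝 (π/2 - π/2)) :=
    tendsto_const_nhds.sub gd_tendsto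
  rw [sub_self] at h; exact h

lemma one_lt_sinh_one : 1 < Real.sinh 1 := by
  rw [Real.sinh_eq]
  have h1 := Real.exp_one_gt_d9
  have h2 : Real.exp (-1) * Real.exp 1 = 1 := by
    rw [← Real.exp_add]; norm_num
  have h3 := Real.exp_pos (-1)
  nlinarith

lemma arccos_cosh_eq : Real.arccos (1/Real.cosh 1) = Real.arctan (Real.sinh 1) := by
  have hc := Real.cosh_pos 1
  have hs : (0:ℝ) < Real.sinh 1 := lt_trans one_pos one_lt_sinh_one
  rw [Real.arccos_eq_arctan (by positivity)]
  congr 1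
  have h1 : 1 - (1/Real.cosh 1)^2 = (Real.sinh 1/Real.cosh 1)^2 := by
    field_simp
    nlinarith [Real.cosh_sq' 1]
  rw [h1, Real.sqrt_sq (by positivity)]
  field_simp

lemma c1_nonneg : 0 ≤ c1 :=
  mul_nonneg (by positivity) (Real.arccos_nonneg _)

lemma c1_le : c1 ≤ Real.sinh 1 := by
  have h := Real.arctan_lt_pi_div_two (Real.sinh 1)
  have hπ := Real.pi_pos
  rw [c1, arccos_cosh_eq, div_mul_eq_mul_div, div_le_iff₀ hπ]
  nlinarith [one_lt_sinh_one]

/-- Numerator controlling the sign of the derivative of the lower-bound gap. -/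
noncomputable def Nf (x : ℝ) : ℝ :=
  c1 * (1 + Real.sinh x^2 + Real.sinh 1^2) - Real.sinh 1 * (Real.sinh x * Real.cosh x)

lemma Nf_hasDerivAt (x : ℝ) :
    HasDerivAt Nf (c1 * (2*Real.sinh x*Real.cosh x)
      - Real.sinh 1 * (Real.cosh x^2 + Real.sinh x^2)) x := by
  have hs := Real.hasDerivAt_sinh x
  have hc := Real.hasDerivAt_cosh x
  have h1 : HasDerivAt (fun t => Real.sinh t^2) (2*Real.sinh x*Real.cosh x) x := by
    have := hs.pow 2
    refine this.congr_deriv (Eq.symm ?_)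
    ring
  have h2 : HasDerivAt (fun t => Real.sinh t * Real.cosh t)
      (Real.cosh x^2 + Real.sinh x^2) x := by
    have := hs.mul hc
    refine this.congr_deriv (Eq.symm ?_)
    ring
  have := (((h1.const_add (1:ℝ)).add_const (Real.sinh 1^2)).const_mul c1).sub
    (h2.const_mul (Real.sinh 1))
  exact this

lemma Nf_antitone : Antitone Nf := by
  apply antitone_of_hasDerivAt_nonpos Nf_hasDerivAt
  intro x
  simp only [Pi.zero_apply]
  have h1 : 0 ≤ c1 * (Real.cosh x - Real.sinh x)^2 :=
    mul_nonneg c1_nonneg (sq_nonneg _)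
  have h2 : 0 ≤ (Real.sinh 1 - c1) * (Real.cosh x^2 + Real.sinh x^2) :=
    mul_nonneg (sub_nonneg.2 c1_le) (by positivity)
  nlinarith

lemma Nf_tendsto_key : c1 < Real.sinh 1 :=
  lt_of_le_of_lt (by
    have h := Real.arctan_lt_pi_div_two (Real.sinh 1)
    have hπ := Real.pi_pos
    rw [c1, arccos_cosh_eq, div_mul_eq_mul_div, div_le_iff₀ hπ]
    nlinarith : c1 ≤ 1) one_lt_sinh_one

/-- The lower-bound gap. -/
noncomputable def fL (x : ℝ) : ℝ := Fb x - c1 * Gm x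

lemma fL_hasDerivAt (x : ℝ) :
    HasDerivAt fL (Nf x / (Real.cosh x * (1 + Real.sinh x^2 + Real.sinh 1^2))) x := by
  have h := (Fb_hasDerivAt x).sub ((Gm_hasDerivAt x).const_mul c1)
  refine h.congr_deriv (Eq.symm ?_)
  have hc := Real.cosh_pos x
  have hP : (0:ℝ) < 1 + Real.sinh x^2 + Real.sinh 1^2 := by positivity
  unfold Nf
  field_simp
  ring

lemma fL_tendsto : Tendsto fL atTop (𝓝 0) := by
  have h := Fb_tendsto.sub (Gm_tendsto.const_mul c1)
  rw [mul_zero, sub_zero] at h; exact h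

lemma fL_zero : fL 0 = 0 := by
  have hπ := Real.pi_pos
  simp only [fL, Fb, Gm, c1, gd, Real.sinh_zero, Real.arctan_zero, arccos_cosh_eq]
  rw [show (0:ℝ) - 1 = -1 by ring, Real.sinh_neg, Real.arctan_neg]
  field_simp
  rw [zero_add]; ring

lemma fL_nonneg {h : ℝ} (hh : 0 ≤ h) : 0 ≤ fL h := by
  by_cases hN : 0 ≤ Nf h
  · have mono : MonotoneOn fL (Set.Icc 0 h) := by
      apply monotoneOn_of_hasDerivWithinAt_nonneg (convex_Icc 0 h)
        (fun x _ => (fL_hasDerivAt x).continuousAt.continuousWithinAt)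
        (fun x _ => (fL_hasDerivAt x).hasDerivWithinAt)
      intro x hx
      rw [interior_Icc] at hx
      have hNx : 0 ≤ Nf x := le_trans hN (Nf_antitone hx.2.le)
      have hc := Real.cosh_pos x
      have hP : (0:ℝ) < 1 + Real.sinh x^2 + Real.sinh 1^2 := by positivity
      positivity
    have := mono (Set.left_mem_Icc.2 hh) (Set.right_mem_Icc.2 hh) hh
    rwa [fL_zero] at this
  · push_neg at hN
    have anti : AntitoneOn fL (Set.Ici h) := by
      apply antitoneOn_of_hasDerivWithinAt_nonpos (convex_Ici h)
        (fun x _ => (fL_hasDerivAt x).continuousAt.continuousWithinAt)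
        (fun x _ => (fL_hasDerivAt x).hasDerivWithinAt)
      intro x hx
      rw [interior_Ici] at hx
      have hNx : Nf x ≤ 0 := le_of_lt (lt_of_le_of_lt (Nf_antitone (le_of_lt hx)) hN)
      have hc := Real.cosh_pos x
      have hP : (0:ℝ) < 1 + Real.sinh x^2 + Real.sinh 1^2 := by positivity
      exact div_nonpos_of_nonpos_of_nonneg hNx (by positivity)
    refine le_of_tendsto fL_tendsto ?_
    filter_upwards [eventually_ge_atTop h] with y hy
    exact anti (Set.self_mem_Ici) hy hy

/-- The upper-bound gap. -/
noncomputable def gU (x : ℝ) : ℝ := Real.sinh 1 * Gm x - Fb x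

lemma gU_hasDerivAt (x : ℝ) :
    HasDerivAt gU (Real.sinh 1 * (-(1 / Real.cosh x))
      - (-(Real.sinh x * Real.sinh 1)/(1 + Real.sinh x^2 + Real.sinh 1^2))) x :=
  ((Gm_hasDerivAt x).const_mul (Real.sinh 1)).sub (Fb_hasDerivAt x)

lemma gU_tendsto : Tendsto gU atTop (𝓝 0) := by
  have h := (Gm_tendsto.const_mul (Real.sinh 1)).sub Fb_tendsto
  rw [mul_zero, sub_zero] at h; exact h

lemma gU_antitone : Antitone gU := by
  apply antitone_of_hasDerivAt_nonpos gU_hasDerivAt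
  intro x
  simp only [Pi.zero_apply]
  have hc := Real.cosh_pos x
  have hP : (0:ℝ) < 1 + Real.sinh x^2 + Real.sinh 1^2 := by positivity
  have hs : (0:ℝ) < Real.sinh 1 := lt_trans one_pos one_lt_sinh_one
  have key : Real.sinh x * Real.cosh x ≤ 1 + Real.sinh x^2 + Real.sinh 1^2 := by
    nlinarith [sq_nonneg (Real.cosh x - Real.sinh x), Real.cosh_sq' x, sq_nonneg (Real.sinh 1)]
  have e : Real.sinh 1 * (-(1 / Real.cosh x))
      - (-(Real.sinh x * Real.sinh 1)/(1 + Real.sinh x^2 + Real.sinh 1^2))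
      = Real.sinh 1 * (Real.sinh x * Real.cosh x - (1 + Real.sinh x^2 + Real.sinh 1^2))
        / (Real.cosh x * (1 + Real.sinh x^2 + Real.sinh 1^2)) := by
    field_simp
    ring
  rw [e]
  apply div_nonpos_of_nonpos_of_nonneg _ (by positivity)
  exact mul_nonpos_of_nonneg_of_nonpos hs.le (by linarith)

lemma gU_nonneg (h : ℝ) : 0 ≤ gU h := by
  refine le_of_tendsto gU_tendsto ?_
  filter_upwards [eventually_ge_atTop h] with y hy
  exact gU_antitone hy

end Auxiliary

/-- For all h ≥ 0: (2/π)·arccos(1/cosh 1)·γ̃(h) ≤ β̃(h) ≤ sinh(1)·γ̃(h). -/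
theorem betaT_bounds (h : ℝ) (hh : 0 ≤ h) :
    (2 / π) * Real.arccos (1 / Real.cosh 1) * gammaT h ≤ betaT h ∧
    betaT h ≤ Real.sinh 1 * gammaT h := by
  have h1 := fL_nonneg hh
  have h2 := gU_nonneg h
  rw [betaT_eq, gammaT_eq]
  unfold fL at h1
  unfold gU at h2
  constructor
  · have : c1 * Gm h ≤ Fb h := by linarith
    simpa [c1] using this
  · linarith
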